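/- Every positive concave function is a standard interference function: if f : ℝ_{≥0}^K → ℝ_{>0} is concave on ℝ_{≥0}^K (i.e., f(λx + (1−λ)y) ≥ λf(x) + (1−λ)f(y) for all x, y ∈ ℝ_{≥0}^K and λ ∈ [0,1]) and takes only strictly positive values, then f is monotone (x ≥ y coordinatewise implies f(x) ≥ f(y)) and scalable (for all x ∈ ℝ_{≥0}^K and α > 1, α·f(x) > f(α·x)). -/

import Mathlib

open Filter Topology MeasureTheory

/-- The nonnegative orthant of `ℝ^K`. -/
def NonnegOrth (K : ℕ) : Set (Fin K → ℝ) := {x | ∀ i, 0 ≤ x i}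

/-- A standard interference function: positive, monotone and scalable on the
nonnegative orthant. -/
def StdIF {K : ℕ} (f : (Fin K → ℝ) → ℝ) : Prop :=
  (∀ x ∈ NonnegOrth K, 0 < f x) ∧
  (∀ x ∈ NonnegOrth K, ∀ y ∈ NonnegOrth K, (∀ i, y i ≤ x i) → f y ≤ f x) ∧
  (∀ x ∈ NonnegOrth K, ∀ α : ℝ, 1 < α → f (α • x) < α * f x)

/-- Assumption 1: each utility `u k` equals `p k / f k p` on the nonnegative orthant,
for a continuous standard interference function `f k`. -/
def Assumption1 {K : ℕ} (u f : Fin K → (Fin K → ℝ) → ℝ) : Prop :=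
  ∀ k, StdIF (f k) ∧ ContinuousOn (f k) (NonnegOrth K) ∧
    ∀ p ∈ NonnegOrth K, u k p = p k / f k p

/-- A monotone norm on `ℝ^K`. -/
def IsMonoNorm {K : ℕ} (N : (Fin K → ℝ) → ℝ) : Prop :=
  (∀ x, 0 ≤ N x) ∧ (∀ x, N x = 0 ↔ x = 0) ∧
  (∀ (a : ℝ) (x : Fin K → ℝ), N (a • x) = |a| * N x) ∧
  (∀ x y, N (x + y) ≤ N x + N y) ∧
  (∀ x y : Fin K → ℝ, x ∈ NonnegOrth K → (∀ i, x i ≤ y i) → N x ≤ N y)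

/-- The utilities of `p` are on the weak Pareto boundary under the constraint `C`. -/
def WeakPareto {K : ℕ} (u : Fin K → (Fin K → ℝ) → ℝ)
    (C : Set (Fin K → ℝ)) (p : Fin K → ℝ) : Prop :=
  ¬ ∃ p' ∈ C, ∀ k, u k p < u k p'

/-- Feasibility for the weighted max-min problem (1). -/
def Feas1 {K : ℕ} (N : (Fin K → ℝ) → ℝ) (pbar : ℝ) (p : Fin K → ℝ) : Prop :=
  p ∈ NonnegOrth K ∧ N p ≤ pbar

/-- Optimality for the weighted max-min problem (1):
maximize `min_k (ω k)⁻¹ * u k p` subject to `‖p‖ ≤ pbar`. -/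
def Sol1 {K : ℕ} (N : (Fin K → ℝ) → ℝ) (pbar : ℝ) (ω : Fin K → ℝ)
    (u : Fin K → (Fin K → ℝ) → ℝ) (p : Fin K → ℝ) : Prop :=
  Feas1 N pbar p ∧ ∀ q, Feas1 N pbar q →
    (⨅ k, (ω k)⁻¹ * u k q) ≤ ⨅ k, (ω k)⁻¹ * u k p

/-- Feasibility for the epigraph-form problem (2). -/
def Feas2 {K : ℕ} (N : (Fin K → ℝ) → ℝ) (pbar : ℝ) (ω : Fin K → ℝ)
    (u : Fin K → (Fin K → ℝ) → ℝ) (c : ℝ) (p : Fin K → ℝ) : Prop :=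
  0 ≤ c ∧ p ∈ NonnegOrth K ∧ N p ≤ pbar ∧ ∀ k, c * ω k ≤ u k p

/-- Optimality for the epigraph-form problem (2): maximize `c` subject to
`‖p‖ ≤ pbar` and `u k p ≥ c * ω k` for all `k`. -/
def Sol2 {K : ℕ} (N : (Fin K → ℝ) → ℝ) (pbar : ℝ) (ω : Fin K → ℝ)
    (u : Fin K → (Fin K → ℝ) → ℝ) (c : ℝ) (p : Fin K → ℝ) : Prop :=
  Feas2 N pbar ω u c p ∧ ∀ c' p', Feas2 N pbar ω u c' p' → c' ≤ c

/-- Feasibility for the fixed-point-form problem (4). -/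
def Feas4 {K : ℕ} (N : (Fin K → ℝ) → ℝ) (pbar : ℝ)
    (T : (Fin K → ℝ) → Fin K → ℝ) (c : ℝ) (p : Fin K → ℝ) : Prop :=
  0 ≤ c ∧ p ∈ NonnegOrth K ∧ N p ≤ pbar ∧ p = c • T p

/-- Optimality for the fixed-point-form problem (4): maximize `c` subject to
`‖p‖ ≤ pbar` and `p = c • T p`. -/
def Sol4 {K : ℕ} (N : (Fin K → ℝ) → ℝ) (pbar : ℝ)
    (T : (Fin K → ℝ) → Fin K → ℝ) (c : ℝ) (p : Fin K → ℝ) : Prop :=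
  Feas4 N pbar T c p ∧ ∀ c' p', Feas4 N pbar T c' p' → c' ≤ c

/-- Every positive concave function on the nonnegative orthant is a standard
interference function: it is monotone and scalable. -/
theorem stmt13 {K : ℕ} (f : (Fin K → ℝ) → ℝ)
    (hconc : ConcaveOn ℝ (NonnegOrth K) f)
    (hpos : ∀ x ∈ NonnegOrth K, 0 < f x) :
    (∀ x ∈ NonnegOrth K, ∀ y ∈ NonnegOrth K, (∀ i, y i ≤ x i) → f y ≤ f x) ∧
    (∀ x ∈ NonnegOrth K, ∀ α : ℝ, 1 < α → f (α • x) < α * f x) := by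
  constructor
  · -- monotonicity
    intro x hx y hy hle
    by_contra hlt
    push_neg at hlt
    have hfy : 0 < f y := hpos y hy
    set ε : ℝ := f y - f x with hε
    have hεpos : 0 < ε := by simp [hε]; linarith
    set t : ℝ := max 2 (2 * f y / ε) with ht
    have ht2 : (2:ℝ) ≤ t := le_max_left _ _
    have htpos : 0 < t := by linarith
    have hfyt : f y / t ≤ ε / 2 := by
      have h1 : 2 * f y / ε ≤ t := le_max_right _ _
      rw [div_le_div_iff₀ htpos (by norm_num : (0:ℝ) < 2)]
      have h2 : (2 * f y / ε) * ε = 2 * f y := by field_simp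
      nlinarith
    set z : Fin K → ℝ := y + t • (x - y) with hz
    have hzmem : z ∈ NonnegOrth K := by
      intro i
      have h1 := hle i
      have h2 := hy i
      simp only [hz, Pi.add_apply, Pi.smul_apply, Pi.sub_apply, smul_eq_mul]
      nlinarith
    have hxcomb : x = (1/t) • z + (1 - 1/t) • y := by
      funext i
      simp only [hz, Pi.add_apply, Pi.smul_apply, Pi.sub_apply, smul_eq_mul]
      field_simp
      ring
    have hcc := hconc.2 hzmem hy (by positivity : (0:ℝ) ≤ 1/t)
      (by
        have : 1/t ≤ 1 := by
          rw [div_le_one htpos]; linarith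
        linarith : (0:ℝ) ≤ 1 - 1/t)
      (by ring)
    rw [← hxcomb] at hcc
    have hfz : 0 < f z := hpos z hzmem
    have h1t : 0 < 1/t := by positivity
    have : f y - f y / t ≤ f x := by
      have : (1/t) • f z + (1 - 1/t) • f y ≤ f x := hcc
      simp only [smul_eq_mul] at this
      have hterm : 0 < (1/t) * f z := by positivity
      have : f y - (1/t) * f y ≤ f x := by nlinarith
      have heq : (1/t) * f y = f y / t := by ring
      linarith [heq ▸ this]
    linarith
  · -- scalability
    intro x hx α hα
    have hα0 : 0 < α := by linarith
    have h0mem : (0 : Fin K → ℝ) ∈ NonnegOrth K := fun i => le_refl 0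
    have hax : α • x ∈ NonnegOrth K := fun i => by
      have := hx i
      simp only [Pi.smul_apply, smul_eq_mul]
      positivity
    have hcc := hconc.2 hax h0mem (by positivity : (0:ℝ) ≤ 1/α)
      (by
        have : 1/α < 1 := by rw [div_lt_one hα0]; linarith
        linarith : (0:ℝ) ≤ 1 - 1/α)
      (by ring)
    have hcomb : (1/α) • (α • x) + (1 - 1/α) • (0 : Fin K → ℝ) = x := by
      funext i
      simp only [Pi.add_apply, Pi.smul_apply, Pi.zero_apply, smul_eq_mul]
      field_simp
      ring
    rw [hcomb] at hcc
    simp only [smul_eq_mul] at hcc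
    have hf0 : 0 < f 0 := hpos 0 h0mem
    have h1α : 0 < 1 - 1/α := by
      have : 1/α < 1 := by rw [div_lt_one hα0]; linarith
      linarith
    have : (1/α) * f (α • x) < f x := by nlinarith
    calc f (α • x) = α * ((1/α) * f (α • x)) := by field_simp
      _ < α * f x := by nlinarith
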